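/- Let f : ℝⁿ → ℝ be C^1 near x̄ and suppose there exist positive constants c, δ and a set Σ ⊆ ℝⁿ such that f(x) − f(x̄) ≥ c · dist(x, Σ)^r for all ‖x − x̄‖ ≤ δ. If additionally g : ℝⁿ → ℝ is C^r near x̄ with all derivatives of orders 0 through r vanishing at every point of Σ near x̄, then x̄ is a local minimum of f + g. -/
import Mathlib


open Filter Metric Set Topology

private lemma aux_diffAt {E : Type*} [NormedAddCommGroup E] [NormedSpace ℝ E] {g : E → ℝ}
    {W : Set E} (hW : IsOpen W) {r m : ℕ} (hg : ContDiffOn ℝ r g W) (hm : m < r)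
    {w : E} (hw : w ∈ W) : DifferentiableAt ℝ (iteratedFDeriv ℝ m g) w := by
  have h1 : DifferentiableOn ℝ (iteratedFDerivWithin ℝ m g W) W :=
    hg.differentiableOn_iteratedFDerivWithin (by exact_mod_cast hm) hW.uniqueDiffOn
  have h2 : DifferentiableAt ℝ (iteratedFDerivWithin ℝ m g W) w :=
    (h1 w hw).differentiableAt (hW.mem_nhds hw)
  apply h2.congr_of_eventuallyEq
  filter_upwards [hW.mem_nhds hw] with z hz using (iteratedFDerivWithin_of_isOpen m hW hz).symm

private lemma norm_sub_le_of_seg {E : Type*} [NormedAddCommGroup E] [NormedSpace ℝ E]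
    {y z w : E} (hw : w ∈ segment ℝ y z) : ‖w - y‖ ≤ ‖z - y‖ := by
  obtain ⟨a, b, ha, hb, hab, rfl⟩ := hw
  have : a • y + b • z - y = b • (z - y) := by
    have : a = 1 - b := by linarith
    rw [this]; module
  rw [this, norm_smul, Real.norm_eq_abs, abs_of_nonneg hb]
  nlinarith [norm_nonneg (z - y)]

/-- (ii) ⇒ (i): the growth condition `f(x) - f(xbar) ≥ c·dist(x,S)^r` implies that `xbar`
remains a local minimum of `f + g` for every `C^r` perturbation `g` whose derivatives of
orders `0` through `r` vanish on `S` near `xbar`. -/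
theorem stmt_11 {n : ℕ} (r : ℕ) (hr : 1 ≤ r) (f : EuclideanSpace ℝ (Fin n) → ℝ)
    (xbar : EuclideanSpace ℝ (Fin n)) (S V : Set (EuclideanSpace ℝ (Fin n)))
    (hV : IsOpen V) (hxV : xbar ∈ V) (hf : ContDiffOn ℝ 1 f V)
    (hxS : xbar ∈ S)
    (c δ : ℝ) (hc : 0 < c) (hδ : 0 < δ)
    (hgrow : ∀ x ∈ Metric.closedBall xbar δ,
      c * Metric.infDist x S ^ r ≤ f x - f xbar) :
    ∀ (g : EuclideanSpace ℝ (Fin n) → ℝ) (W : Set (EuclideanSpace ℝ (Fin n))),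
      IsOpen W → xbar ∈ W → ContDiffOn ℝ r g W →
      (∀ z ∈ S ∩ W, ∀ j ≤ r, iteratedFDeriv ℝ j g z = 0) →
      IsLocalMin (f + g) xbar := by
  intro g W hW hxW hg hvanish
  set ε : ℝ := c / 2 with hεdef
  have hε : 0 < ε := by positivity
  -- continuity of the r-th derivative, and smallness near xbar
  have hcont : ContinuousOn (iteratedFDeriv ℝ r g) W :=
    (hg.continuousOn_iteratedFDerivWithin le_rfl hW.uniqueDiffOn).congr
      (iteratedFDerivWithin_of_isOpen r hW).symm
  have hca : ContinuousAt (iteratedFDeriv ℝ r g) xbar :=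
    hcont.continuousAt (hW.mem_nhds hxW)
  have h0 : iteratedFDeriv ℝ r g xbar = 0 := hvanish xbar ⟨hxS, hxW⟩ r le_rfl
  have hev : ∀ᶠ w in 𝓝 xbar, w ∈ W ∧ ‖iteratedFDeriv ℝ r g w‖ < ε := by
    have ht : Filter.Tendsto (iteratedFDeriv ℝ r g) (𝓝 xbar) (𝓝 0) := by
      have := hca.tendsto; rwa [h0] at this
    have h1 : ∀ᶠ w in 𝓝 xbar, ‖iteratedFDeriv ℝ r g w‖ < ε := by
      have := ht (Metric.ball_mem_nhds 0 hε)
      filter_upwards [this] with w hw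
      simpa [Metric.mem_ball, dist_zero_right] using hw
    exact (Filter.Eventually.and (hW.mem_nhds hxW) h1)
  obtain ⟨ρ, hρ, hball⟩ := Metric.eventually_nhds_iff_ball.mp hev
  set B := Metric.ball xbar ρ with hBdef
  have hBW : B ⊆ W := fun w hw => (hball w hw).1
  have hBsmall : ∀ w ∈ B, ‖iteratedFDeriv ℝ r g w‖ < ε := fun w hw => (hball w hw).2
  -- key inductive estimate
  have key : ∀ y, y ∈ S → y ∈ B → ∀ x ∈ B, ∀ j, j ≤ r →
      ∀ z ∈ segment ℝ y x, ‖iteratedFDeriv ℝ (r - j) g z‖ ≤ ε * ‖z - y‖ ^ j := by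
    intro y hyS hyB x hxB j
    induction j with
    | zero =>
      intro _ z hz
      have hzB : z ∈ B := (convex_ball xbar ρ).segment_subset hyB hxB hz
      simpa using (hBsmall z hzB).le
    | succ j IH =>
      intro hj z hz
      have hseg : segment ℝ y z ⊆ segment ℝ y x :=
        (convex_segment y x).segment_subset (left_mem_segment ℝ y x) hz
      have hsegB : segment ℝ y z ⊆ B := fun w hw =>
        (convex_ball xbar ρ).segment_subset hyB hxB (hseg hw)
      have hm : r - (j + 1) + 1 = r - j := by omega
      have hdiff : ∀ w ∈ segment ℝ y z,
          DifferentiableAt ℝ (iteratedFDeriv ℝ (r - (j + 1)) g) w := fun w hw =>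
        aux_diffAt hW hg (by omega) (hBW (hsegB hw))
      have hbound : ∀ w ∈ segment ℝ y z,
          ‖fderiv ℝ (iteratedFDeriv ℝ (r - (j + 1)) g) w‖ ≤ ε * ‖z - y‖ ^ j := by
        intro w hw
        rw [norm_fderiv_iteratedFDeriv, hm]
        calc ‖iteratedFDeriv ℝ (r - j) g w‖ ≤ ε * ‖w - y‖ ^ j :=
              IH (by omega) w (hseg hw)
          _ ≤ ε * ‖z - y‖ ^ j := by
              gcongr
              exact norm_sub_le_of_seg hw
      have hmvt := (convex_segment y z).norm_image_sub_le_of_norm_fderiv_le hdiff hbound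
        (left_mem_segment ℝ y z) (right_mem_segment ℝ y z)
      rw [hvanish y ⟨hyS, hBW hyB⟩ (r - (j + 1)) (by omega), sub_zero] at hmvt
      calc ‖iteratedFDeriv ℝ (r - (j + 1)) g z‖ ≤ ε * ‖z - y‖ ^ j * ‖z - y‖ := hmvt
        _ = ε * ‖z - y‖ ^ (j + 1) := by rw [pow_succ]; ring
  -- pointwise bound on |g|
  have hgb : ∀ x ∈ Metric.ball xbar (ρ / 4), |g x| ≤ ε * Metric.infDist x S ^ r := by
    intro x hx
    set d := Metric.infDist x S with hddef
    have hd0 : 0 ≤ d := Metric.infDist_nonneg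
    have hdx : d ≤ dist x xbar := Metric.infDist_le_dist_of_mem hxS
    have hxρ : dist x xbar < ρ / 4 := hx
    have hA : ∀ η : ℝ, 0 < η → |g x| ≤ ε * (d + η) ^ r := by
      intro η hη
      set η' := min η (ρ / 2) with hη'def
      have hη'pos : 0 < η' := lt_min hη (by linarith)
      have hη'le : η' ≤ ρ / 2 := min_le_right _ _
      obtain ⟨y, hyS, hy⟩ := (Metric.infDist_lt_iff ⟨xbar, hxS⟩).mp
        (show Metric.infDist x S < d + η' by linarith)
      have hyB : y ∈ B := by
        have : dist y xbar ≤ dist y x + dist x xbar := dist_triangle y x xbar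
        rw [dist_comm y x] at this
        simp only [hBdef, Metric.mem_ball]
        linarith
      have hxB : x ∈ B := by
        simp only [hBdef, Metric.mem_ball]; linarith
      have hk := key y hyS hyB x hxB r le_rfl x (right_mem_segment ℝ y x)
      rw [Nat.sub_self] at hk
      rw [norm_iteratedFDeriv_zero, Real.norm_eq_abs] at hk
      have hxy : ‖x - y‖ ≤ d + η' := by
        rw [← dist_eq_norm]; exact hy.le
      calc |g x| ≤ ε * ‖x - y‖ ^ r := hk
        _ ≤ ε * (d + η') ^ r := by gcongr
        _ ≤ ε * (d + η) ^ r := by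
            have h1 : η' ≤ η := min_le_left _ _
            have h2 : (0:ℝ) ≤ d + η' := by linarith
            exact mul_le_mul_of_nonneg_left
              (pow_le_pow_left₀ h2 (by linarith) r) hε.le
    -- let η → 0
    have htend : Filter.Tendsto (fun η : ℝ => ε * (d + η) ^ r) (𝓝[>] 0)
        (𝓝 (ε * d ^ r)) := by
      have : Filter.Tendsto (fun η : ℝ => ε * (d + η) ^ r) (𝓝 0)
          (𝓝 (ε * (d + 0) ^ r)) := by
        apply Filter.Tendsto.const_mul
        exact ((continuous_const.add continuous_id).pow r).tendsto 0
      rw [add_zero] at this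
      exact this.mono_left nhdsWithin_le_nhds
    refine ge_of_tendsto htend ?_
    filter_upwards [self_mem_nhdsWithin] with η hη
    exact hA η hη
  -- g xbar = 0
  have hg0 : g xbar = 0 := by
    have := hvanish xbar ⟨hxS, hxW⟩ 0 (Nat.zero_le r)
    have h := congrArg norm this
    rw [norm_iteratedFDeriv_zero] at h
    simpa using h
  -- conclude
  have hpos : 0 < min δ (ρ / 4) := lt_min hδ (by linarith)
  rw [IsLocalMin, IsMinFilter]
  filter_upwards [Metric.ball_mem_nhds xbar hpos] with x hx
  have hx1 : x ∈ Metric.closedBall xbar δ := by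
    have : dist x xbar < min δ (ρ / 4) := hx
    exact Metric.mem_closedBall.mpr (le_of_lt (lt_of_lt_of_le this (min_le_left _ _)))
  have hx2 : x ∈ Metric.ball xbar (ρ / 4) := by
    have : dist x xbar < min δ (ρ / 4) := hx
    exact Metric.mem_ball.mpr (lt_of_lt_of_le this (min_le_right _ _))
  have h1 := hgrow x hx1
  have h2 := hgb x hx2
  have hd0 : (0:ℝ) ≤ Metric.infDist x S ^ r := pow_nonneg Metric.infDist_nonneg r
  have hneg : -g x ≤ ε * Metric.infDist x S ^ r := (neg_le_abs (g x)).trans h2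
  have hnn : 0 ≤ ε * Metric.infDist x S ^ r := mul_nonneg hε.le hd0
  simp only [Pi.add_apply, hg0]
  rw [hεdef] at hneg hnn
  linarith
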